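/- Let R ⊆ S be an extension of commutative rings whose lattice of intermediate R-subalgebras is distributive. If T ∈ [R,S] is a product (compositum) of finitely many atoms R[x₁], ..., R[xₙ] where each R ⊆ R[xᵢ] is minimal and the R[xᵢ] are distinct, then T = R[x₁ + ⋯ + xₙ]; in particular R ⊆ T is a simple extension. -/

import Mathlib

/-- In a lattice of subalgebras satisfying the distributive law, an atom below a finite
sup lies below one of the terms. -/
theorem atom_le_finset_sup {R S : Type*} [CommRing R] [CommRing S] [Algebra R S]
    (hdistrib : ∀ A B C : Subalgebra R S, A ⊓ (B ⊔ C) = (A ⊓ B) ⊔ (A ⊓ C))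
    {ι : Type*} (s : Finset ι) (f : ι → Subalgebra R S) (a : Subalgebra R S)
    (ha : IsAtom a) (hle : a ≤ s.sup f) : ∃ i ∈ s, a ≤ f i := by
  classical
  induction s using Finset.induction with
  | empty =>
      simp only [Finset.sup_empty] at hle
      exact absurd (le_bot_iff.mp hle) ha.1
  | insert j t hi ih =>
      rw [Finset.sup_insert] at hle
      have key : a = (a ⊓ f j) ⊔ (a ⊓ t.sup f) := by
        rw [← hdistrib]
        exact (inf_eq_left.mpr hle).symm
      rcases (ha.le_iff.mp inf_le_left : a ⊓ f j = ⊥ ∨ a ⊓ f j = a) with h | h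
      · rw [h, bot_sup_eq] at key
        have : a ≤ t.sup f := key ▸ inf_le_right
        obtain ⟨i, his, hile⟩ := ih this
        exact ⟨i, Finset.mem_insert_of_mem his, hile⟩
      · exact ⟨j, Finset.mem_insert_self j t, by rw [← h]; exact inf_le_right⟩

/-- If `R ⊆ S` is distributive and `T` is the compositum of finitely many distinct atoms
`R[x₁], …, R[xₙ]`, then `T = R[x₁ + ⋯ + xₙ]`; in particular `R ⊆ T` is simple. -/
theorem sup_atoms_eq_adjoin_sum {R S : Type*} [CommRing R] [CommRing S] [Algebra R S]
    (hdistrib : ∀ A B C : Subalgebra R S, A ⊓ (B ⊔ C) = (A ⊓ B) ⊔ (A ⊓ C))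
    (n : ℕ) (x : Fin n → S)
    (hatom : ∀ i, IsAtom (Algebra.adjoin R {x i}))
    (hdistinct : Function.Injective fun i => Algebra.adjoin R {x i})
    (T : Subalgebra R S) (hT : T = ⨆ i, Algebra.adjoin R {x i}) :
    T = Algebra.adjoin R {∑ i, x i} := by
  classical
  set f : Fin n → Subalgebra R S := fun i => Algebra.adjoin R {x i} with hf
  set A : Subalgebra R S := Algebra.adjoin R {∑ i, x i} with hA
  have hxi_mem : ∀ i, x i ∈ f i := fun i => Algebra.self_mem_adjoin_singleton R (x i)
  have hxT : ∀ i, x i ∈ T := fun i => hT ▸ (le_iSup f i) (hxi_mem i)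
  have hAT : A ≤ T := by
    rw [hA, Algebra.adjoin_le_iff]
    intro y hy
    rw [Set.mem_singleton_iff] at hy
    subst hy
    exact Subalgebra.sum_mem T fun i _ => hxT i
  have hTsup : T = Finset.univ.sup f := by
    rw [hT, Finset.sup_eq_iSup]
    simp
  -- each atom lies below A
  have hfA : ∀ i, f i ≤ A := by
    intro i
    rcases ((hatom i).le_iff.mp (inf_le_left : f i ⊓ A ≤ f i)) with h | h
    · -- f i ⊓ A = ⊥ leads to a contradiction
      exfalso
      have hsplit : Finset.univ.sup f = f i ⊔ (Finset.univ.erase i).sup f := by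
        rw [← Finset.sup_insert, Finset.insert_erase (Finset.mem_univ i)]
      have hAle : A ≤ (Finset.univ.erase i).sup f := by
        have : A = (A ⊓ f i) ⊔ (A ⊓ (Finset.univ.erase i).sup f) := by
          rw [← hdistrib, ← hsplit, ← hTsup]
          exact (inf_eq_left.mpr hAT).symm
        rw [inf_comm, h, bot_sup_eq] at this
        exact this ▸ inf_le_right
      set B : Subalgebra R S := (Finset.univ.erase i).sup f with hB
      have hsum_mem : (∑ j, x j) ∈ B :=
        hAle (Algebra.self_mem_adjoin_singleton R _)
      have hrest_mem : (∑ j ∈ Finset.univ.erase i, x j) ∈ B :=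
        Subalgebra.sum_mem B fun j hj => Finset.le_sup (f := f) hj (hxi_mem j)
      have hxiB : x i ∈ B := by
        have heq : x i = (∑ j, x j) - ∑ j ∈ Finset.univ.erase i, x j := by
          rw [← Finset.sum_erase_add Finset.univ x (Finset.mem_univ i)]
          ring
        rw [heq]
        exact Subalgebra.sub_mem B hsum_mem hrest_mem
      have hfiB : f i ≤ B := by
        rw [hf, Algebra.adjoin_le_iff]
        simpa using hxiB
      obtain ⟨j, hj, hle⟩ := atom_le_finset_sup hdistrib _ f (f i) (hatom i) hfiB
      have hji : j ≠ i := (Finset.mem_erase.mp hj).1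
      rcases (hatom j).le_iff.mp hle with h' | h'
      · exact (hatom i).1 h'
      · exact hji (hdistinct h').symm
    · exact le_of_eq_of_le h.symm inf_le_right
  have hTA : T ≤ A := by
    rw [hT]
    exact iSup_le hfA
  exact le_antisymm hTA hAT
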